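/- Let n ∈ ℕ, let r ∈ {1,…,n}, let a, a' ∈ ℝ^n with a_r = 1 and a'_r = −1, let b, b' ∈ ℝ, and let ℓ, u ∈ ℝ^n with ℓ_j ≤ u_j for all j. Define β := b − Σ_{j ≠ r} max(a_j·ℓ_j, a_j·u_j), which is the lower bound on x_r propagated by the reason constraint Σ_j a_j x_j ≥ b over the box [ℓ, u]. If the conflict constraint Σ_j a'_j x_j ≥ b' is infeasible after this propagation, i.e. −β + Σ_{j ≠ r} max(a'_j·ℓ_j, a'_j·u_j) < b', then the resolvent eliminating x_r, namely Σ_{j ≠ r} (a_j + a'_j) x_j ≥ b + b', is infeasible over the box [ℓ, u], i.e. Σ_{j ≠ r} max((a_j + a'_j)·ℓ_j, (a_j + a'_j)·u_j) < b + b'. -/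
import Mathlib

/-- Proposition 1 (tight propagation resolution): if the reason constraint
`∑ a_j x_j ≥ b` (with `a_r = 1`) propagates the lower bound `β` on `x_r` over the
box `[ℓ,u]`, and the conflict constraint `∑ a'_j x_j ≥ b'` (with `a'_r = -1`) is
infeasible after this propagation, then the resolvent eliminating `x_r` is
infeasible over the box. -/
theorem resolvent_infeasible_of_tight_propagation
    (n : ℕ) (r : Fin n) (a a' : Fin n → ℝ)
    (har : a r = 1) (ha'r : a' r = -1) (b b' : ℝ)
    (ℓ u : Fin n → ℝ) (hlu : ∀ j, ℓ j ≤ u j)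
    (β : ℝ)
    (hβ : β = b - ∑ j ∈ Finset.univ.erase r, max (a j * ℓ j) (a j * u j))
    (hconfl : -β + ∑ j ∈ Finset.univ.erase r, max (a' j * ℓ j) (a' j * u j) < b') :
    ∑ j ∈ Finset.univ.erase r, max ((a j + a' j) * ℓ j) ((a j + a' j) * u j) < b + b' := by
  have key : ∑ j ∈ Finset.univ.erase r, max ((a j + a' j) * ℓ j) ((a j + a' j) * u j)
      ≤ (∑ j ∈ Finset.univ.erase r, max (a j * ℓ j) (a j * u j))
        + ∑ j ∈ Finset.univ.erase r, max (a' j * ℓ j) (a' j * u j) := by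
    rw [← Finset.sum_add_distrib]
    refine Finset.sum_le_sum fun j _ => ?_
    rw [add_mul, add_mul]
    exact max_le (add_le_add (le_max_left _ _) (le_max_left _ _))
      (add_le_add (le_max_right _ _) (le_max_right _ _))
  have : ∑ j ∈ Finset.univ.erase r, max (a' j * ℓ j) (a' j * u j) < b' + β := by linarith
  linarith
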